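/- Let n, m ≥ 1 and let f : ℤ → ℤ be a nondecreasing map satisfying f(x+n) = f(x)+m for all x ∈ ℤ. Define additive maps g_!, g_* : ℤ[ℤ/nℤ] → ℤ[ℤ/mℤ] on basis elements by g_!([y]) = [f(ỹ) mod m] and g_*([y]) = Σ_{z = f(ỹ)}^{f(ỹ+1)−1} [z mod m], where ỹ ∈ ℤ is any lift of y ∈ ℤ/nℤ (both maps are independent of the choice of lift, and unchanged if f is replaced by f + m). Then b_m ∘ g_* = g_! ∘ b_n, where for k ≥ 1, b_k : ℤ[ℤ/kℤ] → ℤ[ℤ/kℤ] is the additive map with b_k([y]) = [y] − [y+1]. -/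

import Mathlib

noncomputable def cyclicB (k : ℕ) : (ZMod k →₀ ℤ) → (ZMod k →₀ ℤ) :=
  fun v => v - Finsupp.mapDomain (fun y => y + 1) v

lemma cyclicB_add (k : ℕ) (a b : ZMod k →₀ ℤ) :
    cyclicB k (a + b) = cyclicB k a + cyclicB k b := by
  simp only [cyclicB, Finsupp.mapDomain_add]; abel

lemma cyclicB_smul (k : ℕ) (c : ℤ) (a : ZMod k →₀ ℤ) :
    cyclicB k (c • a) = c • cyclicB k a := by
  simp only [cyclicB, Finsupp.mapDomain_smul, smul_sub]

lemma cyclicB_single (k : ℕ) (y : ZMod k) :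
    cyclicB k (Finsupp.single y (1 : ℤ)) =
      Finsupp.single y (1 : ℤ) - Finsupp.single (y + 1) (1 : ℤ) := by
  simp [cyclicB, Finsupp.mapDomain_single]

lemma tel (M : Type*) [AddCommGroup M] (g : ℤ → M) :
    ∀ a b : ℤ, a ≤ b → ∑ z ∈ Finset.Ico a b, (g z - g (z + 1)) = g a - g b := by
  intro a b hab
  refine Int.le_induction (motive := fun b _ => ∑ z ∈ Finset.Ico a b, (g z - g (z + 1)) = g a - g b) ?_ ?_ b hab
  · simp
  · intro b hb ih
    have hins : Finset.Ico a (b + 1) = insert b (Finset.Ico a b) := by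
      ext x; simp only [Finset.mem_Ico, Finset.mem_insert]; omega
    rw [hins, Finset.sum_insert (by simp), ih]
    abel

theorem stmt_4 (n m : ℕ) (hn : 0 < n) (hm : 0 < m) (f : ℤ → ℤ)
    (hmono : Monotone f) (hper : ∀ x : ℤ, f (x + (n : ℤ)) = f x + (m : ℤ))
    (G₁ G₂ : (ZMod n →₀ ℤ) →+ (ZMod m →₀ ℤ))
    (hG₁ : ∀ y : ZMod n, G₁ (Finsupp.single y 1) =
      Finsupp.single ((f (y.val : ℤ) : ZMod m)) 1)
    (hG₂ : ∀ y : ZMod n, G₂ (Finsupp.single y 1) =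
      ∑ z ∈ Finset.Ico (f (y.val : ℤ)) (f ((y.val : ℤ) + 1)),
        Finsupp.single ((z : ZMod m)) 1) :
    ∀ v : ZMod n →₀ ℤ, cyclicB m (G₂ v) = G₁ (cyclicB n v) := by
  haveI : NeZero n := ⟨hn.ne'⟩
  have hper' : ∀ (k : ℤ) (x : ℤ), f (x + k * n) = f x + k * m := by
    intro k
    induction k using Int.induction_on with
    | zero => simp
    | succ k ih =>
      intro x
      have := hper (x + k * n)
      rw [ih] at this
      have h1 : x + k * n + n = x + (k + 1) * n := by ring
      rw [h1] at this
      rw [this]; ring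
    | pred k ih =>
      intro x
      have := hper (x + (-(k : ℤ) - 1) * n)
      have h1 : x + (-(k : ℤ) - 1) * n + n = x + (-(k : ℤ)) * n := by ring
      rw [h1, ih] at this
      have : f (x + (-(k : ℤ) - 1) * n) = f x + (-(k : ℤ)) * m - m := by omega
      rw [this]; push_cast; ring
  have key : ∀ y : ZMod n, cyclicB m (G₂ (Finsupp.single y 1))
      = G₁ (cyclicB n (Finsupp.single y 1)) := by
    intro y
    rw [hG₂ y, cyclicB_single, map_sub, hG₁ y, hG₁ (y + 1)]
    have hab : f (y.val : ℤ) ≤ f ((y.val : ℤ) + 1) := hmono (by omega)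
    have hB : cyclicB m (∑ z ∈ Finset.Ico (f (y.val : ℤ)) (f ((y.val : ℤ) + 1)),
        Finsupp.single ((z : ZMod m)) (1 : ℤ))
        = ∑ z ∈ Finset.Ico (f (y.val : ℤ)) (f ((y.val : ℤ) + 1)),
          (Finsupp.single ((z : ZMod m)) (1 : ℤ)
            - Finsupp.single (((z : ZMod m)) + 1) (1 : ℤ)) := by
      rw [cyclicB, Finsupp.mapDomain_finset_sum, ← Finset.sum_sub_distrib]
      congr 1; ext z
      rw [Finsupp.mapDomain_single]
    rw [hB]
    have ht := tel (ZMod m →₀ ℤ) (fun z : ℤ => Finsupp.single ((z : ZMod m)) (1 : ℤ))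
      (f (y.val : ℤ)) (f ((y.val : ℤ) + 1)) hab
    simp only [Int.cast_add, Int.cast_one] at ht
    rw [ht]
    have hmod : ((f ((y.val : ℤ) + 1) : ZMod m))
        = ((f (((y + 1 : ZMod n).val : ℤ)) : ZMod m)) := by
      have hdvd : (n : ℤ) ∣ ((y.val : ℤ) + 1 - ((y + 1 : ZMod n).val : ℤ)) := by
        have h0 : (((y.val : ℤ) + 1 - ((y + 1 : ZMod n).val : ℤ) : ℤ) : ZMod n) = 0 := by
          push_cast
          simp [ZMod.natCast_val, ZMod.cast_id]
        exact (ZMod.intCast_zmod_eq_zero_iff_dvd _ n).mp h0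
      obtain ⟨k, hk⟩ := hdvd
      rw [mul_comm] at hk
      have hx : (y.val : ℤ) + 1 = ((y + 1 : ZMod n).val : ℤ) + k * n := by omega
      rw [hx, hper' k]
      push_cast
      simp
    rw [hmod]
  intro v
  induction v using Finsupp.induction_linear with
  | zero => simp [cyclicB]
  | add a b ha hb => rw [map_add, cyclicB_add, ha, hb, cyclicB_add, map_add]
  | single y c =>
    have hc : Finsupp.single y c = c • Finsupp.single y (1 : ℤ) := by
      rw [Finsupp.smul_single, smul_eq_mul, mul_one]
    rw [hc, map_zsmul, cyclicB_smul, key, cyclicB_smul, map_zsmul]
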